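/- Let F be a field of characteristic not 2 and a, b ∈ F with ab(a−b) ≠ 0. Let (x₁, y₁) and (x₂, y₂) be affine points on the curve x(ay² − 1) = y(bx² − 1), and suppose (bx₁x₂ + 1)(ay₁y₂ − 1)(bx₁x₂ − 1)(ay₁y₂ + 1) ≠ 0. Then the point (x₃, y₃) with x₃ = (x₁ + x₂)(ay₁y₂ + 1)/((bx₁x₂ + 1)(ay₁y₂ − 1)) and y₃ = (y₁ + y₂)(bx₁x₂ + 1)/((bx₁x₂ − 1)(ay₁y₂ + 1)) also lies on the curve x(ay² − 1) = y(bx² − 1). -/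

import Mathlib

set_option maxRecDepth 8000
set_option maxHeartbeats 2000000

theorem huff_affine_add_closure {F : Type*} [Field F] (a b : F)
    (h2 : (2 : F) ≠ 0) (ha : a ≠ 0) (hb : b ≠ 0) (hab : a ≠ b)
    (x₁ y₁ x₂ y₂ : F)
    (h₁ : x₁ * (a * y₁ ^ 2 - 1) = y₁ * (b * x₁ ^ 2 - 1))
    (h₂ : x₂ * (a * y₂ ^ 2 - 1) = y₂ * (b * x₂ ^ 2 - 1))
    (hden : (b * x₁ * x₂ + 1) * (a * y₁ * y₂ - 1) * (b * x₁ * x₂ - 1) * (a * y₁ * y₂ + 1) ≠ 0)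
    (x₃ y₃ : F)
    (hx₃ : x₃ = (x₁ + x₂) * (a * y₁ * y₂ + 1) / ((b * x₁ * x₂ + 1) * (a * y₁ * y₂ - 1)))
    (hy₃ : y₃ = (y₁ + y₂) * (b * x₁ * x₂ + 1) / ((b * x₁ * x₂ - 1) * (a * y₁ * y₂ + 1))) :
    x₃ * (a * y₃ ^ 2 - 1) = y₃ * (b * x₃ ^ 2 - 1) := by
  have hDxp : b * x₁ * x₂ + 1 ≠ 0 := fun h => hden (by rw [h]; ring)
  have hDym : a * y₁ * y₂ - 1 ≠ 0 := fun h => hden (by rw [h]; ring)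
  have hDxm : b * x₁ * x₂ - 1 ≠ 0 := fun h => hden (by rw [h]; ring)
  have hDyp : a * y₁ * y₂ + 1 ≠ 0 := fun h => hden (by rw [h]; ring)
  subst hx₃ hy₃
  have key : ((x₁ + x₂) * (a * y₁ * y₂ + 1)) * ((b * x₁ * x₂ + 1) * (a * y₁ * y₂ - 1)) *
      (a * ((y₁ + y₂) * (b * x₁ * x₂ + 1))^2 - ((b * x₁ * x₂ - 1) * (a * y₁ * y₂ + 1))^2)
      = ((y₁ + y₂) * (b * x₁ * x₂ + 1)) * ((b * x₁ * x₂ - 1) * (a * y₁ * y₂ + 1)) *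
      (b * ((x₁ + x₂) * (a * y₁ * y₂ + 1))^2 - ((b * x₁ * x₂ + 1) * (a * y₁ * y₂ - 1))^2) := by
    linear_combination ((-1)*a^3*b^3*x₁^3*y₁^2*x₂^3*y₂^4 + (-1)*a^3*b^3*x₁^2*y₁^2*x₂^4*y₂^4 + (-1)*a^2*b^4*x₁^4*y₁*x₂^3*y₂^4 + (1)*a^2*b^4*x₁^3*y₁^2*x₂^4*y₂^3 + (-1)*a*b^5*x₁^5*x₂^3*y₂^4 + (1)*a*b^5*x₁^4*y₁*x₂^4*y₂^3 + (1)*b^6*x₁^5*x₂^4*y₂^3 + (1)*a^3*b^2*x₁^2*y₁^2*x₂^2*y₂^4 + (1)*a^3*b^2*x₁*y₁^2*x₂^3*y₂^4 + (1)*a^2*b^3*x₁^3*y₁^2*x₂^3*y₂^2 + (-1)*a^2*b^3*x₁^3*y₁^2*x₂^2*y₂^3 + (1)*a^2*b^3*x₁^2*y₁^2*x₂^4*y₂^2 + (2)*a^2*b^3*x₁^2*y₁*x₂^3*y₂^4 + (-1)*a^2*b^3*x₁*y₁^2*x₂^4*y₂^3 + (1)*a*b^4*x₁^4*y₁*x₂^3*y₂^2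 + (-1)*a*b^4*x₁^4*y₁*x₂^2*y₂^3 + (3)*a*b^4*x₁^3*x₂^3*y₂^4 + (-2)*a*b^4*x₁^2*y₁*x₂^4*y₂^3 + (1)*b^5*x₁^5*x₂^3*y₂^2 + (-1)*b^5*x₁^5*x₂^2*y₂^3 + (-3)*b^5*x₁^3*x₂^4*y₂^3 + (1)*a^3*b*x₁*y₁^2*x₂*y₂^4 + (1)*a^3*b*y₁^2*x₂^2*y₂^4 + (3)*a^2*b^2*x₁^2*y₁^2*x₂^2*y₂^2 + (8)*a^2*b^2*x₁^2*y₁*x₂^2*y₂^3 + (1)*a^2*b^2*x₁^2*y₁*x₂*y₂^4 + (4)*a^2*b^2*x₁^2*x₂^2*y₂^4 + (3)*a^2*b^2*x₁*y₁^2*x₂^3*y₂^2 + (8)*a^2*b^2*x₁*y₁*x₂^3*y₂^3 + (4)*a^2*b^2*x₁*x₂^3*y₂^4 + (-1)*a^2*b^2*y₁*x₂^3*y₂^4 + (1)*a*b^3*x₁^3*x₂^3*y₂^2 + (4)*a*b^3*x₁^3*x₂^2*y₂^3 + (1)*a*b^3*x₁^3*x₂*y₂^4 + (-6)*a*b^3*x₁^2*y₁*x₂^3*y₂^2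 + (1)*a*b^3*x₁^2*y₁*x₂^2*y₂^3 + (1)*a*b^3*x₁^2*x₂^4*y₂^2 + (-4)*a*b^3*x₁*y₁*x₂^4*y₂^2 + (-4)*a*b^3*x₁*x₂^4*y₂^3 + (-3)*a*b^3*x₁*x₂^3*y₂^4 + (1)*a*b^3*y₁*x₂^4*y₂^3 + (-1)*b^4*x₁^3*x₂^4*y₂ + (-7)*b^4*x₁^3*x₂^3*y₂^2 + (2)*b^4*x₁^3*x₂^2*y₂^3 + (-4)*b^4*x₁^2*x₂^4*y₂^2 + (3)*b^4*x₁*x₂^4*y₂^3 + (-1)*a^3*y₁^2*y₂^4 + (3)*a^2*b*x₁*y₁^2*x₂*y₂^2 + (1)*a^2*b*x₁*y₁^2*y₂^3 + (8)*a^2*b*x₁*y₁*x₂*y₂^3 + (4)*a^2*b*x₁*x₂*y₂^4 + (3)*a^2*b*y₁^2*x₂^2*y₂^2 + (8)*a^2*b*y₁*x₂^2*y₂^3 + (-1)*a^2*b*y₁*x₂*y₂^4 + (4)*a^2*b*x₂^2*y₂^4 + (3)*a*b^2*x₁^2*y₁*x₂*y₂^2 + (1)*a*b^2*x₁^2*y₁*y₂^3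 + (3)*a*b^2*x₁^2*x₂^2*y₂^2 + (8)*a*b^2*x₁^2*x₂*y₂^3 + (3)*a*b^2*x₁*x₂^3*y₂^2 + (-2)*a*b^2*x₁*x₂*y₂^4 + (-3)*a*b^2*y₁*x₂^3*y₂^2 + (-8)*a*b^2*x₂^3*y₂^3 + (-1)*b^3*x₁^3*x₂^3 + (-3)*b^3*x₁^3*x₂^2*y₂ + (3)*b^3*x₁^3*x₂*y₂^2 + (1)*b^3*x₁^3*y₂^3 + (-1)*b^3*x₁^2*x₂^4 + (-8)*b^3*x₁^2*x₂^3*y₂ + (-3)*b^3*x₁*x₂^4*y₂ + (3)*b^3*x₁*x₂^3*y₂^2 + (-1)*b^3*x₁*x₂^2*y₂^3 + (4)*b^3*x₂^4*y₂^2 + (1)*a^2*y₁^2*y₂^2 + (4)*a*b*x₁*y₁*y₂^2 + (3)*a*b*x₁*x₂*y₂^2 + (4)*a*b*x₁*y₂^3 + (5)*a*b*y₁*x₂*y₂^2 + (-1)*a*b*y₁*y₂^3 + (3)*a*b*x₂^2*y₂^2 + (-3)*b^2*x₁^2*x₂^2 + (4)*b^2*x₁^2*y₂^2 + (-3)*b^2*x₁*x₂^3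 + (2)*b^2*x₁*x₂*y₂^2 + (-2)*b^2*x₁*y₂^3 + (1)*a*y₂^2 + (-3)*b*x₁*x₂ + (3)*b*x₁*y₂ + (-3)*b*x₂^2 + (8)*b*x₂*y₂ + (-4)*b*y₂^2 + (-1)) * h₁ + ((-1)*b^6*x₁^7*y₁*x₂^2*y₂^2 + (-1)*a*b^4*x₁^5*y₁*x₂^2*y₂^2 + (-1)*b^5*x₁^6*x₂^2*y₂^2 + (4)*b^5*x₁^5*y₁*x₂^2*y₂^2 + (4)*a*b^3*x₁^4*y₁*x₂*y₂^2 + (6)*a*b^3*x₁^3*y₁*x₂^2*y₂^2 + (1)*b^4*x₁^5*y₁*x₂^2 + (4)*b^4*x₁^5*y₁*x₂*y₂ + (1)*b^4*x₁^5*y₁*y₂^2 + (4)*b^4*x₁^4*y₁*x₂^2*y₂ + (3)*b^4*x₁^4*x₂^2*y₂^2 + (-6)*b^4*x₁^3*y₁*x₂^2*y₂^2 + (-1)*a^3*y₁^4*y₂^2 + (8)*a*b^2*x₁^3*y₁*x₂*y₂ + (5)*a*b^2*x₁^3*y₁*y₂^2 + (4)*a*b^2*x₁^3*x₂*y₂^2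 + (8)*a*b^2*x₁^2*y₁*x₂^2*y₂ + (4)*a*b^2*x₁^2*x₂^2*y₂^2 + (-5)*a*b^2*x₁*y₁*x₂^2*y₂^2 + (1)*a*b^2*y₁^2*x₂^2*y₂^2 + (4)*b^3*x₁^4*y₁*x₂ + (4)*b^3*x₁^4*y₁*y₂ + (4)*b^3*x₁^4*x₂*y₂ + (1)*b^3*x₁^4*y₂^2 + (2)*b^3*x₁^3*y₁*x₂^2 + (-4)*b^3*x₁^3*y₁*x₂*y₂ + (-3)*b^3*x₁^3*y₁*y₂^2 + (4)*b^3*x₁^3*x₂^2*y₂ + (-8)*b^3*x₁^2*y₁*x₂^2*y₂ + (-3)*b^3*x₁^2*x₂^2*y₂^2 + (3)*b^3*x₁*y₁*x₂^2*y₂^2 + (1)*a^2*y₁^2*y₂^2 + (8)*a*b*x₁^2*y₁*y₂ + (4)*a*b*x₁^2*y₂^2 + (8)*a*b*x₁*y₁*x₂*y₂ + (-5)*a*b*x₁*y₁*y₂^2 + (4)*a*b*x₁*x₂*y₂^2 + (-4)*a*b*y₁^2*x₂*y₂ + (1)*a*b*y₁^2*y₂^2 + (-4)*a*b*y₁*x₂*y₂^2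 + (3)*b^2*x₁^3*y₁ + (4)*b^2*x₁^3*x₂ + (4)*b^2*x₁^3*y₂ + (-8)*b^2*x₁^2*y₁*y₂ + (4)*b^2*x₁^2*x₂^2 + (-2)*b^2*x₁^2*y₂^2 + (-3)*b^2*x₁*y₁*x₂^2 + (2)*b^2*x₁*y₁*y₂^2 + (-4)*b^2*x₁*x₂^2*y₂ + (4)*b^2*y₁*x₂^2*y₂ + (1)*a*y₁^2 + (4)*b*x₁^2 + (-3)*b*x₁*y₁ + (4)*b*x₁*x₂ + (-4)*b*x₁*y₂ + (-4)*b*y₁*x₂ + (4)*b*y₁*y₂ + (-1)) * h₂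
  have hDX : (b * x₁ * x₂ + 1) * (a * y₁ * y₂ - 1) ≠ 0 := mul_ne_zero hDxp hDym
  have hDY : (b * x₁ * x₂ - 1) * (a * y₁ * y₂ + 1) ≠ 0 := mul_ne_zero hDxm hDyp
  rw [show (x₁ + x₂) * (a * y₁ * y₂ + 1) / ((b * x₁ * x₂ + 1) * (a * y₁ * y₂ - 1)) *
      (a * ((y₁ + y₂) * (b * x₁ * x₂ + 1) / ((b * x₁ * x₂ - 1) * (a * y₁ * y₂ + 1))) ^ 2 - 1)
      = ((x₁ + x₂) * (a * y₁ * y₂ + 1) *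
        (a * ((y₁ + y₂) * (b * x₁ * x₂ + 1)) ^ 2 - ((b * x₁ * x₂ - 1) * (a * y₁ * y₂ + 1)) ^ 2)) /
        ((b * x₁ * x₂ + 1) * (a * y₁ * y₂ - 1) * ((b * x₁ * x₂ - 1) * (a * y₁ * y₂ + 1)) ^ 2) from by
      rw [div_pow, mul_div_assoc', div_sub_one (pow_ne_zero 2 hDY), div_mul_div_comm],
    show (y₁ + y₂) * (b * x₁ * x₂ + 1) / ((b * x₁ * x₂ - 1) * (a * y₁ * y₂ + 1)) *
      (b * ((x₁ + x₂) * (a * y₁ * y₂ + 1) / ((b * x₁ * x₂ + 1) * (a * y₁ * y₂ - 1))) ^ 2 - 1)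
      = ((y₁ + y₂) * (b * x₁ * x₂ + 1) *
        (b * ((x₁ + x₂) * (a * y₁ * y₂ + 1)) ^ 2 - ((b * x₁ * x₂ + 1) * (a * y₁ * y₂ - 1)) ^ 2)) /
        ((b * x₁ * x₂ - 1) * (a * y₁ * y₂ + 1) * ((b * x₁ * x₂ + 1) * (a * y₁ * y₂ - 1)) ^ 2) from by
      rw [div_pow, mul_div_assoc', div_sub_one (pow_ne_zero 2 hDX), div_mul_div_comm],
    div_eq_div_iff (mul_ne_zero hDX (pow_ne_zero 2 hDY)) (mul_ne_zero hDY (pow_ne_zero 2 hDX))]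
  linear_combination ((b * x₁ * x₂ + 1) * (a * y₁ * y₂ - 1) * (b * x₁ * x₂ - 1) * (a * y₁ * y₂ + 1)) * key
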